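/- Let q ∈ ℂ with q ≠ 0, 1, let M, N ≥ 1, let B₁,…,B_N be M×M complex matrices, let t₁,…,t_N ∈ ℂ, and let y : ℂ → ℂ^M. Fix x ∈ ℂ with x ≠ 0, x ≠ t_i and qx ≠ t_i for all i, and suppose y(x) − y(qx) = (1−q)·x·Σ_{i=1}^N (x − t_i)⁻¹ · B_i · y(x) (i.e., (D_q y)(x) = Σ_i B_i y(x)/(x − t_i)). Define Y₀(z) ∈ ℂ^{MN} to be the block vector whose i-th block is y(z)/(z − t_i). Then (x·I_{MN} − S/q)·(Y₀(x) − Y₀(qx))/((1−q)x) = (1/q)·(B − I_{MN})·Y₀(x), where S is the block-diagonal matrix with i-th diagonal block t_i·I_M and B is the MN×MN block matrix whose (i,j)-block equals B_j for every i. -/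

import Mathlib

/-- If `y` solves `D_q y = Σᵢ Bᵢ y/(x − tᵢ)`, then the block vector `Y₀` with `i`-th
block `y/(x − tᵢ)` solves the `q`-Okubo type system
`(x I − S/q) D_q Y₀ = (1/q)(B − I) Y₀`. -/
theorem okubo_system (q : ℂ) (hq0 : q ≠ 0) (hq1 : q ≠ 1)
    (M N : ℕ) (hM : 1 ≤ M) (hN : 1 ≤ N)
    (B : Fin N → Matrix (Fin M) (Fin M) ℂ) (t : Fin N → ℂ)
    (y : ℂ → Fin M → ℂ) (x : ℂ) (hx : x ≠ 0)
    (hxt : ∀ i, x ≠ t i) (hqxt : ∀ i, q * x ≠ t i)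
    (hsys : y x - y (q * x) = ((1 - q) * x) • ∑ i, (x - t i)⁻¹ • (B i).mulVec (y x)) :
    (x • (1 : Matrix (Fin N × Fin M) (Fin N × Fin M) ℂ)
        - q⁻¹ • Matrix.of (fun p r : Fin N × Fin M => if p = r then t p.1 else 0)).mulVec
      (fun p => (y x p.2 / (x - t p.1) - y (q * x) p.2 / (q * x - t p.1)) / ((1 - q) * x)) =
    q⁻¹ • ((Matrix.of (fun p r : Fin N × Fin M => (B r.1) p.2 r.2)
        - 1).mulVec (fun p => y x p.2 / (x - t p.1))) := by
  have h1q : (1:ℂ) - q ≠ 0 := sub_ne_zero.mpr (Ne.symm hq1)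
  have hd : ∀ j, x - t j ≠ 0 := fun j => sub_ne_zero.mpr (hxt j)
  have hd' : ∀ j, q * x - t j ≠ 0 := fun j => sub_ne_zero.mpr (hqxt j)
  funext p
  obtain ⟨i, a⟩ := p
  have hs := congrFun hsys a
  simp only [Pi.sub_apply, Pi.smul_apply, Finset.sum_apply, smul_eq_mul] at hs
  set S := ∑ j, (x - t j)⁻¹ * ((B j).mulVec (y x)) a with hSdef
  have hyq : y (q * x) a = y x a - (1 - q) * x * S := by
    rw [← hs]; ring
  simp only [Matrix.mulVec, dotProduct, Matrix.sub_apply, Matrix.smul_apply,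
    Matrix.one_apply, Matrix.of_apply, smul_eq_mul, Pi.smul_apply, Pi.sub_apply,
    mul_ite, mul_one, mul_zero, sub_mul, ite_mul, zero_mul]
  rw [Finset.sum_sub_distrib, Finset.sum_ite_eq, Finset.sum_ite_eq, Finset.sum_sub_distrib,
    Finset.sum_ite_eq]
  simp only [Finset.mem_univ, if_true]
  have hB : ∑ r : Fin N × Fin M, B r.1 a r.2 * (y x r.2 / (x - t r.1)) = S := by
    rw [Fintype.sum_prod_type, hSdef]
    refine Finset.sum_congr rfl fun j _ => ?_
    rw [Matrix.mulVec, dotProduct, Finset.mul_sum]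
    refine Finset.sum_congr rfl fun b _ => ?_
    field_simp
  rw [hB, hyq]
  have e1 : y x a / (x - t i) - (y x a - (1 - q) * x * S) / (q * x - t i)
      = (1 - q) * x * (((x - t i) * S - y x a) / ((x - t i) * (q * x - t i))) := by
    rw [div_sub_div _ _ (hd i) (hd' i), ← mul_div_assoc]
    congr 1
    ring
  have h5 : ∀ E : ℂ, (1 - q) * x * E / ((1:ℂ) * x - q * x) = E := by
    intro E
    rw [show (1:ℂ) * x - q * x = (1 - q) * x by ring]
    field_simp
  rw [e1, h5]
  have hd'' : x * q - t i ≠ 0 := by rw [mul_comm]; exact hd' i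
  field_simp [hq0, hd i, hd' i, hd'']
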